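/- The minimum height among all directed elimination forests for a digraph G equals the cycle rank of G. -/
import Mathlib


open scoped Classical

variable {V : Type*}

/-- `b` is reachable from `a` by a (possibly empty) directed path staying inside `S`. -/
def ReachIn (E : V → V → Prop) (S : Finset V) (a b : V) : Prop :=
  Relation.ReflTransGen (fun x y => x ∈ S ∧ y ∈ S ∧ E x y) a b

/-- The induced subdigraph `G[S]` is strongly connected. -/
def StronglyConnIn (E : V → V → Prop) (S : Finset V) : Prop :=
  ∀ a ∈ S, ∀ b ∈ S, ReachIn E S a b

/-- The induced subdigraph `G[S]` contains at least one edge. -/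
def HasEdgeIn (E : V → V → Prop) (S : Finset V) : Prop :=
  ∃ a ∈ S, ∃ b ∈ S, E a b

/-- `G[S]` is acyclic: every strongly connected component of `G[S]` is trivial,
equivalently there is no edge lying on a closed walk inside `S`. -/
def AcyclicIn (E : V → V → Prop) (S : Finset V) : Prop :=
  ¬ ∃ a ∈ S, ∃ b ∈ S, E a b ∧ ReachIn E S b a

open Classical in
/-- The strongly connected component of `v` in the induced subdigraph `G[S]`. -/
noncomputable def sccOf [DecidableEq V] (E : V → V → Prop) (S : Finset V) (v : V) : Finset V :=
  S.filter (fun u => ReachIn E S v u ∧ ReachIn E S u v)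

open Classical in
/-- Fuel-based auxiliary function implementing the recursive definition of cycle rank. -/
noncomputable def crankAux [DecidableEq V] (E : V → V → Prop) : ℕ → Finset V → ℕ
  | 0, _ => 0
  | n + 1, S =>
    if AcyclicIn E S then 0
    else if StronglyConnIn E S then
      1 + sInf {m | ∃ v ∈ S, crankAux E n (S.erase v) = m}
    else
      S.sup (fun v => crankAux E n (sccOf E S v))

/-- The cycle rank of the digraph `(V, E)`. -/
noncomputable def crank [DecidableEq V] [Fintype V] (E : V → V → Prop) : ℕ :=
  crankAux E (Fintype.card V) Finset.univ


/-- `ElimTreeHLe E x X h` holds iff there exists a directed elimination tree for the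
nontrivially strongly connected induced subdigraph `G[X]` with root `(x, X)` whose height
(number of nodes on a longest root-to-leaf path) is at most `h`. The children of a node
`(x, X)` are nodes `(y, Y)` for the nontrivial strongly connected components `Y` of `G[X] - x`. -/
inductive ElimTreeHLe {V : Type*} [DecidableEq V] (E : V → V → Prop) : V → Finset V → ℕ → Prop
  | node (x : V) (X : Finset V) (h : ℕ)
      (hx : x ∈ X) (hsc : StronglyConnIn E X) (hnt : HasEdgeIn E X)
      (y : V → V)
      (hmem : ∀ v ∈ X.erase x, HasEdgeIn E (sccOf E (X.erase x) v) →
        y v ∈ sccOf E (X.erase x) v)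
      (hch : ∀ v ∈ X.erase x, HasEdgeIn E (sccOf E (X.erase x) v) →
        ElimTreeHLe E (y v) (sccOf E (X.erase x) v) h) :
      ElimTreeHLe E x X (h + 1)

/-- There exists a directed elimination forest for `G` of height at most `h`:
for every nontrivial strongly connected component `C` of `G` there is a directed
elimination tree for `G[C]` of height at most `h`. -/
def ElimForestHLe {V : Type*} [DecidableEq V] [Fintype V] (E : V → V → Prop) (h : ℕ) : Prop :=
  ∀ v : V, HasEdgeIn E (sccOf E Finset.univ v) →
    ∃ x ∈ sccOf E Finset.univ v, ElimTreeHLe E x (sccOf E Finset.univ v) h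

/-! ### Auxiliary lemmas -/

section AuxLemmas
variable [DecidableEq V] {E : V → V → Prop}

omit [DecidableEq V] in
lemma ReachIn.trans' {S : Finset V} {a b c : V} (h1 : ReachIn E S a b) (h2 : ReachIn E S b c) :
    ReachIn E S a c := Relation.ReflTransGen.trans h1 h2

lemma mem_sccOf_iff {S : Finset V} {v u : V} :
    u ∈ sccOf E S v ↔ u ∈ S ∧ ReachIn E S v u ∧ ReachIn E S u v := by
  simp [sccOf]

lemma mem_sccOf_self {S : Finset V} {v : V} (hv : v ∈ S) : v ∈ sccOf E S v :=
  mem_sccOf_iff.2 ⟨hv, Relation.ReflTransGen.refl, Relation.ReflTransGen.refl⟩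

lemma sccOf_subset (S : Finset V) (v : V) : sccOf E S v ⊆ S := Finset.filter_subset _ _

lemma reachIn_sccOf {S : Finset V} {v a b : V} (ha : a ∈ sccOf E S v) (hb : b ∈ sccOf E S v)
    (hab : ReachIn E S a b) : ReachIn E (sccOf E S v) a b := by
  obtain ⟨haS, hva, hav⟩ := mem_sccOf_iff.1 ha
  obtain ⟨hbS, hvb, hbv⟩ := mem_sccOf_iff.1 hb
  clear haS hav hva
  induction hab using Relation.ReflTransGen.head_induction_on with
  | refl => exact Relation.ReflTransGen.refl
  | head hac hcb ih =>
    rename_i a' c'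
    obtain ⟨ha'S, hc'S, hE⟩ := hac
    have ha' : a' ∈ sccOf E S v := ha
    have hc' : c' ∈ sccOf E S v := by
      refine mem_sccOf_iff.2 ⟨hc'S, ?_, ?_⟩
      · exact (mem_sccOf_iff.1 ha').2.1.trans' (Relation.ReflTransGen.single ⟨ha'S, hc'S, hE⟩)
      · exact Relation.ReflTransGen.trans hcb hbv
    exact Relation.ReflTransGen.head ⟨ha', hc', hE⟩ (ih hc')

lemma sccOf_stronglyConn (S : Finset V) (v : V) : StronglyConnIn E (sccOf E S v) := by
  intro a ha b hb
  obtain ⟨haS, hva, hav⟩ := mem_sccOf_iff.1 ha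
  obtain ⟨hbS, hvb, hbv⟩ := mem_sccOf_iff.1 hb
  exact reachIn_sccOf ha hb (hav.trans' hvb)

lemma sccOf_eq_self {S : Finset V} {v : V} (hv : v ∈ S) (hsc : StronglyConnIn E S) :
    sccOf E S v = S := by
  ext u
  refine ⟨fun h => sccOf_subset S v h, fun hu => mem_sccOf_iff.2 ⟨hu, hsc v hv u hu, hsc u hu v hv⟩⟩

lemma stronglyConn_of_sccOf_eq {S : Finset V} {v : V} (hv : v ∈ S)
    (h : sccOf E S v = S) : StronglyConnIn E S := by
  intro a ha b hb
  have ha' := mem_sccOf_iff.1 (h ▸ ha)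
  have hb' := mem_sccOf_iff.1 (h ▸ hb)
  exact ha'.2.2.trans' hb'.2.1

lemma not_hasEdge_sccOf_of_acyclic {S : Finset V} (hac : AcyclicIn E S) (v : V) :
    ¬ HasEdgeIn E (sccOf E S v) := by
  rintro ⟨a, ha, b, hb, hE⟩
  obtain ⟨haS, hva, hav⟩ := mem_sccOf_iff.1 ha
  obtain ⟨hbS, hvb, hbv⟩ := mem_sccOf_iff.1 hb
  exact hac ⟨a, haS, b, hbS, hE, hbv.trans' hva⟩

omit [DecidableEq V] in
lemma acyclicIn_of_not_hasEdge {S : Finset V} (h : ¬ HasEdgeIn E S) : AcyclicIn E S := by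
  rintro ⟨a, ha, b, hb, hE, _⟩
  exact h ⟨a, ha, b, hb, hE⟩

omit [DecidableEq V] in
lemma not_acyclic_of_sc_edge {S : Finset V} (hsc : StronglyConnIn E S) (he : HasEdgeIn E S) :
    ¬ AcyclicIn E S := by
  obtain ⟨a, ha, b, hb, hE⟩ := he
  exact fun hac => hac ⟨a, ha, b, hb, hE, hsc b hb a ha⟩

lemma nonempty_of_not_acyclic {S : Finset V} (h : ¬ AcyclicIn E S) : S.Nonempty := by
  by_contra hne
  exact h (acyclicIn_of_not_hasEdge (by rintro ⟨a, ha, _⟩; exact hne ⟨a, ha⟩))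

lemma sccOf_card_lt {S : Finset V} {v : V} (hv : v ∈ S) (hnsc : ¬ StronglyConnIn E S) :
    (sccOf E S v).card < S.card := by
  refine Finset.card_lt_card (Finset.ssubset_iff_subset_ne.2 ⟨sccOf_subset S v, fun h => ?_⟩)
  exact hnsc (stronglyConn_of_sccOf_eq hv h)

lemma crankAux_of_acyclic {S : Finset V} (n : ℕ) (h : AcyclicIn E S) : crankAux E n S = 0 := by
  cases n with
  | zero => rfl
  | succ n => simp [crankAux, h]

lemma crankAux_fuel : ∀ (k : ℕ) (S : Finset V) (n m : ℕ), S.card ≤ k → S.card ≤ n →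
    S.card ≤ m → crankAux E n S = crankAux E m S := by
  intro k
  induction k with
  | zero =>
    intro S n m hk _ _
    have hS : S = ∅ := Finset.card_eq_zero.1 (Nat.le_zero.1 hk)
    subst hS
    have hac : AcyclicIn E (∅ : Finset V) := by rintro ⟨a, ha, _⟩; simp at ha
    rw [crankAux_of_acyclic n hac, crankAux_of_acyclic m hac]
  | succ k ih =>
    intro S n m hk hn hm
    by_cases hac : AcyclicIn E S
    · rw [crankAux_of_acyclic n hac, crankAux_of_acyclic m hac]
    have hne : S.Nonempty := nonempty_of_not_acyclic hac
    have h1 : 1 ≤ S.card := Finset.card_pos.2 hne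
    obtain ⟨n, rfl⟩ : ∃ n', n = n' + 1 := ⟨n - 1, by omega⟩
    obtain ⟨m, rfl⟩ : ∃ m', m = m' + 1 := ⟨m - 1, by omega⟩
    simp only [crankAux, if_neg hac]
    by_cases hsc : StronglyConnIn E S
    · rw [if_pos hsc, if_pos hsc]
      congr 1
      congr 1
      ext j
      constructor
      · rintro ⟨v, hv, rfl⟩
        refine ⟨v, hv, ?_⟩
        have hcard : (S.erase v).card = S.card - 1 := Finset.card_erase_of_mem hv
        exact (ih (S.erase v) m n (by omega) (by omega) (by omega))
      · rintro ⟨v, hv, rfl⟩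
        refine ⟨v, hv, ?_⟩
        have hcard : (S.erase v).card = S.card - 1 := Finset.card_erase_of_mem hv
        exact (ih (S.erase v) n m (by omega) (by omega) (by omega))
    · rw [if_neg hsc, if_neg hsc]
      refine Finset.sup_congr rfl fun v hv => ?_
      have hcard := sccOf_card_lt hv hsc
      exact ih (sccOf E S v) n m (by omega) (by omega) (by omega)

noncomputable def crankIn (E : V → V → Prop) (S : Finset V) : ℕ := crankAux E S.card S

lemma crankIn_of_acyclic {S : Finset V} (h : AcyclicIn E S) : crankIn E S = 0 :=
  crankAux_of_acyclic _ h

lemma crankIn_sc {S : Finset V} (hsc : StronglyConnIn E S) (hna : ¬ AcyclicIn E S) :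
    crankIn E S = 1 + sInf {m | ∃ v ∈ S, crankIn E (S.erase v) = m} := by
  have hne : S.Nonempty := nonempty_of_not_acyclic hna
  have h1 : 1 ≤ S.card := Finset.card_pos.2 hne
  obtain ⟨c, hc⟩ : ∃ c, S.card = c + 1 := ⟨S.card - 1, by omega⟩
  unfold crankIn
  rw [hc]
  simp only [crankAux, if_neg hna, if_pos hsc]
  congr 1
  congr 1
  ext j
  constructor
  · rintro ⟨v, hv, rfl⟩
    have hcard : (S.erase v).card = S.card - 1 := Finset.card_erase_of_mem hv
    exact ⟨v, hv, (crankAux_fuel c (S.erase v) (S.erase v).card c (by omega) le_rfl (by omega))⟩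
  · rintro ⟨v, hv, rfl⟩
    have hcard : (S.erase v).card = S.card - 1 := Finset.card_erase_of_mem hv
    exact ⟨v, hv, (crankAux_fuel c (S.erase v) c (S.erase v).card (by omega) (by omega) le_rfl)⟩

lemma crankIn_nsc {S : Finset V} (hna : ¬ AcyclicIn E S) (hnsc : ¬ StronglyConnIn E S) :
    crankIn E S = S.sup (fun v => crankIn E (sccOf E S v)) := by
  have hne : S.Nonempty := nonempty_of_not_acyclic hna
  have h1 : 1 ≤ S.card := Finset.card_pos.2 hne
  obtain ⟨c, hc⟩ : ∃ c, S.card = c + 1 := ⟨S.card - 1, by omega⟩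
  unfold crankIn
  rw [hc]
  simp only [crankAux, if_neg hna, if_neg hnsc]
  refine Finset.sup_congr rfl fun v hv => ?_
  have hcard := sccOf_card_lt hv hnsc
  exact crankAux_fuel c (sccOf E S v) c (sccOf E S v).card (by omega) (by omega) le_rfl

lemma crankIn_sccOf_le {S : Finset V} {v : V} (hv : v ∈ S) :
    crankIn E (sccOf E S v) ≤ crankIn E S := by
  by_cases hac : AcyclicIn E S
  · rw [crankIn_of_acyclic (acyclicIn_of_not_hasEdge (not_hasEdge_sccOf_of_acyclic hac v))]
    exact Nat.zero_le _
  by_cases hsc : StronglyConnIn E S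
  · rw [sccOf_eq_self hv hsc]
  · rw [crankIn_nsc hac hsc]
    exact Finset.le_sup (f := fun v => crankIn E (sccOf E S v)) hv

lemma crankIn_le_sup_sccOf (S : Finset V) :
    crankIn E S ≤ S.sup (fun v => crankIn E (sccOf E S v)) := by
  by_cases hac : AcyclicIn E S
  · rw [crankIn_of_acyclic hac]; exact Nat.zero_le _
  by_cases hsc : StronglyConnIn E S
  · obtain ⟨a, ha⟩ := nonempty_of_not_acyclic hac
    calc crankIn E S = crankIn E (sccOf E S a) := by rw [sccOf_eq_self ha hsc]
      _ ≤ _ := Finset.le_sup (f := fun v => crankIn E (sccOf E S v)) ha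
  · exact le_of_eq (crankIn_nsc hac hsc)

lemma ElimTreeHLe.succ' {x : V} {X : Finset V} {h : ℕ} (t : ElimTreeHLe E x X h) :
    ElimTreeHLe E x X (h + 1) := by
  induction t with
  | node x X h hx hsc hnt y hmem hch ih =>
    exact ElimTreeHLe.node x X (h + 1) hx hsc hnt y hmem ih

lemma ElimTreeHLe.mono {x : V} {X : Finset V} {h h' : ℕ} (hle : h ≤ h')
    (t : ElimTreeHLe E x X h) : ElimTreeHLe E x X h' := by
  induction hle with
  | refl => exact t
  | step _ ih => exact ih.succ'

lemma exists_tree : ∀ (k : ℕ) (S : Finset V), S.card ≤ k → StronglyConnIn E S →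
    HasEdgeIn E S → ∃ x ∈ S, ElimTreeHLe E x S (crankIn E S) := by
  intro k
  induction k with
  | zero =>
    rintro S hk _ ⟨a, ha, _⟩
    simp [Finset.card_eq_zero.1 (Nat.le_zero.1 hk)] at ha
  | succ k ih =>
    intro S hk hsc hnt
    have hna : ¬ AcyclicIn E S := not_acyclic_of_sc_edge hsc hnt
    set M : Set ℕ := {m | ∃ v ∈ S, crankIn E (S.erase v) = m} with hM
    have hMne : M.Nonempty := by
      obtain ⟨a, ha, _⟩ := hnt
      exact ⟨crankIn E (S.erase a), a, ha, rfl⟩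
    obtain ⟨x, hx, hxeq⟩ := Nat.sInf_mem hMne
    have key : ∀ v ∈ S.erase x, HasEdgeIn E (sccOf E (S.erase x) v) →
        ∃ z ∈ sccOf E (S.erase x) v, ElimTreeHLe E z (sccOf E (S.erase x) v) (sInf M) := by
      intro v hv he
      have hsub : (sccOf E (S.erase x) v).card ≤ k := by
        have h1 := Finset.card_le_card (sccOf_subset (E := E) (S.erase x) v)
        have h2 : (S.erase x).card = S.card - 1 := Finset.card_erase_of_mem hx
        have h3 : 1 ≤ S.card := Finset.card_pos.2 ⟨x, hx⟩
        omega
      obtain ⟨z, hz, ht⟩ := ih (sccOf E (S.erase x) v) hsub (sccOf_stronglyConn _ _) he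
      refine ⟨z, hz, ht.mono ?_⟩
      calc crankIn E (sccOf E (S.erase x) v) ≤ crankIn E (S.erase x) := crankIn_sccOf_le hv
        _ = sInf M := hxeq
    choose! y hy1 hy2 using key
    refine ⟨x, hx, ?_⟩
    have : crankIn E S = sInf M + 1 := by rw [crankIn_sc hsc hna, Nat.add_comm]
    rw [this]
    exact ElimTreeHLe.node x S (sInf M) hx hsc hnt y hy1 hy2

lemma crankIn_le_of_tree {x : V} {X : Finset V} {h : ℕ} (t : ElimTreeHLe E x X h) :
    crankIn E X ≤ h := by
  induction t with
  | node x X h hx hsc hnt y hmem hch ih =>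
    have hna : ¬ AcyclicIn E X := not_acyclic_of_sc_edge hsc hnt
    rw [crankIn_sc hsc hna]
    have hT : crankIn E (X.erase x) ≤ h := by
      calc crankIn E (X.erase x)
          ≤ (X.erase x).sup (fun v => crankIn E (sccOf E (X.erase x) v)) :=
            crankIn_le_sup_sccOf _
        _ ≤ h := by
            refine Finset.sup_le fun v hv => ?_
            by_cases he : HasEdgeIn E (sccOf E (X.erase x) v)
            · exact ih v hv he
            · rw [crankIn_of_acyclic (acyclicIn_of_not_hasEdge he)]
              exact Nat.zero_le _
    have hinf : sInf {m | ∃ v ∈ X, crankIn E (X.erase v) = m} ≤ crankIn E (X.erase x) :=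
      Nat.sInf_le ⟨x, hx, rfl⟩
    omega

end AuxLemmas


/-- The minimum height among all directed elimination forests for a digraph `G`
equals the cycle rank of `G`. -/
theorem min_elimForest_height_eq_crank {V : Type*} [DecidableEq V] [Fintype V]
    (E : V → V → Prop) :
    sInf {h : ℕ | ElimForestHLe E h} = crank E := by
  have hcr : crank E = crankIn E Finset.univ := by
    unfold crank crankIn
    rw [Finset.card_univ]
  have hmem : ElimForestHLe E (crank E) := by
    intro v he
    obtain ⟨x, hx, ht⟩ := exists_tree (sccOf E Finset.univ v).card (sccOf E Finset.univ v)
      le_rfl (sccOf_stronglyConn _ _) he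
    refine ⟨x, hx, ht.mono ?_⟩
    rw [hcr]
    exact crankIn_sccOf_le (Finset.mem_univ v)
  refine le_antisymm (Nat.sInf_le hmem) ?_
  refine le_csInf ⟨crank E, hmem⟩ fun h hh => ?_
  rw [hcr]
  calc crankIn E (Finset.univ : Finset V)
      ≤ Finset.univ.sup (fun v => crankIn E (sccOf E Finset.univ v)) := crankIn_le_sup_sccOf _
    _ ≤ h := by
        refine Finset.sup_le fun v _ => ?_
        by_cases he : HasEdgeIn E (sccOf E Finset.univ v)
        · obtain ⟨x, hx, ht⟩ := hh v he
          exact crankIn_le_of_tree ht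
        · rw [crankIn_of_acyclic (acyclicIn_of_not_hasEdge he)]
          exact Nat.zero_le _
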